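/- Let s be a prime power with s ≡ 2 (mod 3), q = s². Each of the three fundamental coordinate lines X_i = 0 meets the plane curve defined by X₀^s X₂ + X₂^s X₁ + X₁^s X₀ - 3(X₀X₁X₂)^{(s+1)/3} = 0 in exactly two points, namely two of the three coordinate vertices (1:0:0), (0:1:0), (0:0:1). -/
import Mathlib


/-- s ≡ 2 (mod 3) a prime power, q = s². Each coordinate line
X_i = 0 meets the curve X₀^s X₂ + X₂^s X₁ + X₁^s X₀ - 3(X₀X₁X₂)^{(s+1)/3} = 0
exactly in the two coordinate vertices different from the i-th one. -/
theorem stmt18 {K : Type*} [Field K] [IsAlgClosed K] (p n s q : ℕ)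
    (hp : p.Prime) [CharP K p] (hs : s = p ^ n) (hn : 0 < n)
    (h3 : s % 3 = 2) (hq : q = s ^ 2) :
    ∀ i : Fin 3, ∀ v : Fin 3 → K, v ≠ 0 → v i = 0 →
      ((v 0) ^ s * v 2 + (v 2) ^ s * v 1 + (v 1) ^ s * v 0
          - 3 * (v 0 * v 1 * v 2) ^ ((s + 1) / 3) = 0 ↔
        ∃ j : Fin 3, j ≠ i ∧ ∃ c : K, c ≠ 0 ∧ v = c • (Pi.single j 1 : Fin 3 → K)) := by
  have hs2 : 2 ≤ s := h3 ▸ Nat.mod_le s 3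
  have hsne : s ≠ 0 := by omega
  have hene : (s + 1) / 3 ≠ 0 := by omega
  intro i v hv hvi
  fin_cases i
  · -- i = 0, v 0 = 0
    replace hvi : v 0 = 0 := hvi
    constructor
    · intro heq
      simp only [hvi, zero_pow hsne, zero_pow hene, zero_mul, mul_zero, add_zero, zero_add,
        sub_zero] at heq
      rcases mul_eq_zero.mp heq with h2 | h1
      · have h2 : v 2 = 0 := pow_eq_zero_iff hsne |>.mp h2
        have h1 : v 1 ≠ 0 := fun h => hv (funext fun x => by fin_cases x <;> simp [hvi, h, h2])
        exact ⟨1, by decide, v 1, h1, funext fun x => by fin_cases x <;>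
          simp [hvi, h2, Pi.single_apply]⟩
      · have h2 : v 2 ≠ 0 := fun h => hv (funext fun x => by fin_cases x <;> simp [hvi, h, h1])
        exact ⟨2, by decide, v 2, h2, funext fun x => by fin_cases x <;>
          simp [hvi, h1, Pi.single_apply]⟩
    · rintro ⟨j, hj, c, hc, rfl⟩
      fin_cases j
      · exact absurd rfl hj
      · simp [Pi.single_apply, zero_pow hsne, zero_pow hene]
      · simp [Pi.single_apply, zero_pow hsne, zero_pow hene]
  · -- i = 1, v 1 = 0
    replace hvi : v 1 = 0 := hvi
    constructor
    · intro heq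
      simp only [hvi, zero_pow hsne, zero_pow hene, zero_mul, mul_zero, add_zero, zero_add,
        sub_zero] at heq
      rcases mul_eq_zero.mp heq with h0 | h2
      · have h0 : v 0 = 0 := pow_eq_zero_iff hsne |>.mp h0
        have h2 : v 2 ≠ 0 := fun h => hv (funext fun x => by fin_cases x <;> simp [hvi, h, h0])
        exact ⟨2, by decide, v 2, h2, funext fun x => by fin_cases x <;>
          simp [hvi, h0, Pi.single_apply]⟩
      · have h0 : v 0 ≠ 0 := fun h => hv (funext fun x => by fin_cases x <;> simp [hvi, h, h2])
        exact ⟨0, by decide, v 0, h0, funext fun x => by fin_cases x <;>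
          simp [hvi, h2, Pi.single_apply]⟩
    · rintro ⟨j, hj, c, hc, rfl⟩
      fin_cases j
      · simp [Pi.single_apply, zero_pow hsne, zero_pow hene]
      · exact absurd rfl hj
      · simp [Pi.single_apply, zero_pow hsne, zero_pow hene]
  · -- i = 2, v 2 = 0
    replace hvi : v 2 = 0 := hvi
    constructor
    · intro heq
      simp only [hvi, zero_pow hsne, zero_pow hene, zero_mul, mul_zero, add_zero, zero_add,
        sub_zero] at heq
      rcases mul_eq_zero.mp heq with h1 | h0
      · have h1 : v 1 = 0 := pow_eq_zero_iff hsne |>.mp h1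
        have h0 : v 0 ≠ 0 := fun h => hv (funext fun x => by fin_cases x <;> simp [hvi, h, h1])
        exact ⟨0, by decide, v 0, h0, funext fun x => by fin_cases x <;>
          simp [hvi, h1, Pi.single_apply]⟩
      · have h1 : v 1 ≠ 0 := fun h => hv (funext fun x => by fin_cases x <;> simp [hvi, h, h0])
        exact ⟨1, by decide, v 1, h1, funext fun x => by fin_cases x <;>
          simp [hvi, h0, Pi.single_apply]⟩
    · rintro ⟨j, hj, c, hc, rfl⟩
      fin_cases j
      · simp [Pi.single_apply, zero_pow hsne, zero_pow hene]
      · simp [Pi.single_apply, zero_pow hsne, zero_pow hene]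
      · exact absurd rfl hj
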